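/- arXiv:1807.00118 — 3 statements merged into one kernel-verified Lean document; each statement's English description precedes it below -/
import Mathlib

section
/- Let 𝔤 be a Lie algebra over ℂ with an invariant symmetric bilinear form ⟨·,·⟩. Then the bilinear map ω on the loop algebra 𝔤 ⊗ ℂ((t)) defined by ω(x ⊗ P, y ⊗ Q) = Res_{t=0}((dP) Q) ⟨x,y⟩ is a 2-cocycle; that is, ω is skew-symmetric and satisfies ω([a,b], c) + ω([b,c], a) + ω([c,a], b) = 0 for all a, b, c in the loop algebra. Consequently, the bracket [x⊗P + zC, y⊗Q + z'C] = [x,y] ⊗ PQ + ω(x⊗P, y⊗Q) C defines a Lie algebra structure on (𝔤 ⊗ ℂ((t))) ⊕ ℂC. -/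
open TensorProduct

lemma aux_bdd (P : LaurentSeries ℂ) : ∃ m : ℤ, ∀ i ∈ P.support, m + 1 ≤ i := by
  rcases P.support.eq_empty_or_nonempty with h | h
  · exact ⟨0, by simp [h]⟩
  · have hwf := P.isPWO_support.isWF
    exact ⟨hwf.min h - 1, fun i hi => by have := hwf.min_le h hi; omega⟩

lemma aux_pwo (m : ℤ) : (Set.Ici m).IsPWO :=
  Set.isPWO_iff_isWF.mpr (bddBelow_Ici.wellFoundedOn_lt)

lemma aux_mul_coeff (P Q : LaurentSeries ℂ) {s t : Set ℤ} (hs : s.IsPWO) (ht : t.IsPWO)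
    (hPs : P.support ⊆ s) (hQt : Q.support ⊆ t) (n : ℤ) :
    (P * Q).coeff n = ∑ ij ∈ Finset.antidiagonal hs ht n, P.coeff ij.1 * Q.coeff ij.2 := by
  rw [HahnSeries.coeff_mul_left' hs hPs]
  refine Finset.sum_subset (Finset.antidiagonal_mono_right hQt) ?_
  intro p hp hnp
  have hz : Q.coeff p.2 = 0 := by
    by_contra hc
    rw [Finset.mem_antidiagonal] at hp hnp
    exact hnp ⟨hp.1, hc, hp.2.2⟩
  simp [hz]

def eshift1 : ℤ × ℤ ↪ ℤ × ℤ :=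
  ⟨fun p => (p.1 + 1, p.2), by intro a b hab; simp only [Prod.ext_iff] at hab ⊢; omega⟩

def eshift2 : ℤ × ℤ ↪ ℤ × ℤ :=
  ⟨fun p => (p.1, p.2 + 1), by intro a b hab; simp only [Prod.ext_iff] at hab ⊢; omega⟩

lemma eshift1_apply (p : ℤ × ℤ) : eshift1 p = (p.1 + 1, p.2) := rfl

lemma eshift2_apply (p : ℤ × ℤ) : eshift2 p = (p.1, p.2 + 1) := rfl

lemma aux_leib (D : LaurentSeries ℂ →ₗ[ℂ] LaurentSeries ℂ)
    (hD : ∀ (P : LaurentSeries ℂ) (n : ℤ), (D P).coeff n = ((n : ℂ) + 1) * P.coeff (n + 1))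
    (P Q : LaurentSeries ℂ) : D (P * Q) = D P * Q + P * D Q := by
  obtain ⟨m, hm⟩ := aux_bdd P
  obtain ⟨k, hk⟩ := aux_bdd Q
  have hs := aux_pwo m
  have ht := aux_pwo k
  have hPs : P.support ⊆ Set.Ici m := fun i hi => by
    have := hm i hi; simp only [Set.mem_Ici]; omega
  have hQt : Q.support ⊆ Set.Ici k := fun i hi => by
    have := hk i hi; simp only [Set.mem_Ici]; omega
  have hPm : P.coeff m = 0 := by
    by_contra hc; have := hm m hc; omega
  have hQk : Q.coeff k = 0 := by
    by_contra hc; have := hk k hc; omega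
  have hDPs : (D P).support ⊆ Set.Ici m := fun i hi => by
    have h1 : (D P).coeff i ≠ 0 := hi
    rw [hD] at h1
    have h2 : P.coeff (i + 1) ≠ 0 := fun h => h1 (by rw [h, mul_zero])
    have := hm (i + 1) h2; simp only [Set.mem_Ici]; omega
  have hDQt : (D Q).support ⊆ Set.Ici k := fun i hi => by
    have h1 : (D Q).coeff i ≠ 0 := hi
    rw [hD] at h1
    have h2 : Q.coeff (i + 1) ≠ 0 := fun h => h1 (by rw [h, mul_zero])
    have := hk (i + 1) h2; simp only [Set.mem_Ici]; omega
  ext n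
  have key1 : (D P * Q).coeff n
      = ∑ ij ∈ Finset.antidiagonal hs ht (n + 1),
          (ij.1 : ℂ) * P.coeff ij.1 * Q.coeff ij.2 := by
    rw [aux_mul_coeff _ _ hs ht hDPs hQt n]
    have hstep : ∑ ij ∈ Finset.antidiagonal hs ht n, (D P).coeff ij.1 * Q.coeff ij.2
        = ∑ ij ∈ (Finset.antidiagonal hs ht n).map eshift1,
            (ij.1 : ℂ) * P.coeff ij.1 * Q.coeff ij.2 := by
      rw [Finset.sum_map]
      refine Finset.sum_congr rfl fun ij _ => ?_
      simp only [eshift1_apply]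
      rw [hD]; push_cast; ring
    rw [hstep]
    refine Finset.sum_subset ?_ ?_
    · intro p hp
      simp only [Finset.mem_map, Finset.mem_antidiagonal, Set.mem_Ici, eshift1_apply] at hp ⊢
      obtain ⟨q, ⟨hq1, hq2, hq3⟩, rfl⟩ := hp
      exact ⟨by omega, hq2, by omega⟩
    · intro p hpA hpN
      have hA' := Finset.mem_antidiagonal.mp hpA
      have hp1 : p.1 = m := by
        by_contra hc
        have h1 : m ≤ p.1 := hA'.1
        have hmem : (p.1 - 1, p.2) ∈ Finset.antidiagonal hs ht n := by
          rw [Finset.mem_antidiagonal]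
          refine ⟨by simp only [Set.mem_Ici]; omega, hA'.2.1, by have := hA'.2.2; omega⟩
        refine hpN (Finset.mem_map.mpr ⟨(p.1 - 1, p.2), hmem, ?_⟩)
        simp only [eshift1_apply]
        ext <;> simp
      have hz : P.coeff p.1 = 0 := by rw [hp1]; exact hPm
      simp [hz]
  have key2 : (P * D Q).coeff n
      = ∑ ij ∈ Finset.antidiagonal hs ht (n + 1),
          P.coeff ij.1 * ((ij.2 : ℂ) * Q.coeff ij.2) := by
    rw [aux_mul_coeff _ _ hs ht hPs hDQt n]
    have hstep : ∑ ij ∈ Finset.antidiagonal hs ht n, P.coeff ij.1 * (D Q).coeff ij.2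
        = ∑ ij ∈ (Finset.antidiagonal hs ht n).map eshift2,
            P.coeff ij.1 * ((ij.2 : ℂ) * Q.coeff ij.2) := by
      rw [Finset.sum_map]
      refine Finset.sum_congr rfl fun ij _ => ?_
      simp only [eshift2_apply]
      rw [hD]; push_cast; ring
    rw [hstep]
    refine Finset.sum_subset ?_ ?_
    · intro p hp
      simp only [Finset.mem_map, Finset.mem_antidiagonal, Set.mem_Ici, eshift2_apply] at hp ⊢
      obtain ⟨q, ⟨hq1, hq2, hq3⟩, rfl⟩ := hp
      exact ⟨hq1, by omega, by omega⟩
    · intro p hpA hpN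
      have hA' := Finset.mem_antidiagonal.mp hpA
      have hp2 : p.2 = k := by
        by_contra hc
        have h1 : k ≤ p.2 := hA'.2.1
        have hmem : (p.1, p.2 - 1) ∈ Finset.antidiagonal hs ht n := by
          rw [Finset.mem_antidiagonal]
          refine ⟨hA'.1, by simp only [Set.mem_Ici]; omega, by have := hA'.2.2; omega⟩
        refine hpN (Finset.mem_map.mpr ⟨(p.1, p.2 - 1), hmem, ?_⟩)
        simp only [eshift2_apply]
        ext <;> simp
      have hz : Q.coeff p.2 = 0 := by rw [hp2]; exact hQk
      simp [hz]
  rw [HahnSeries.coeff_add, key1, key2, hD, aux_mul_coeff P Q hs ht hPs hQt (n + 1),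
    Finset.mul_sum, ← Finset.sum_add_distrib]
  refine Finset.sum_congr rfl fun ij hij => ?_
  have h1 : ij.1 + ij.2 = n + 1 := (Finset.mem_antidiagonal.mp hij).2.2
  have h2 : (ij.1 : ℂ) + (ij.2 : ℂ) = (n : ℂ) + 1 := by exact_mod_cast congrArg (Int.cast : ℤ → ℂ) h1
  linear_combination (-(P.coeff ij.1 * Q.coeff ij.2)) * h2

/-- The bilinear map `ω(x⊗P, y⊗Q) = Res_{t=0}((dP)Q)⟨x,y⟩` on the loop algebra
`𝔤 ⊗ ℂ((t))` (with pointwise bracket `[x⊗P, y⊗Q] = [x,y] ⊗ PQ`) is a 2-cocycle: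
it is skew-symmetric and satisfies the cocycle identity; consequently the bracket
`[(a, z), (b, z')] = ([a,b], ω a b)` on `(𝔤 ⊗ ℂ((t))) ⊕ ℂC` is alternating and
satisfies the Jacobi (Leibniz) identity, i.e. defines a Lie algebra structure. -/
theorem stmt_3 (g : Type) [LieRing g] [LieAlgebra ℂ g]
    (B : g →ₗ[ℂ] g →ₗ[ℂ] ℂ)
    (hBsymm : ∀ x y : g, B x y = B y x)
    (hBinv : ∀ x y z : g, B ⁅x, y⁆ z = B x ⁅y, z⁆)
    (D : LaurentSeries ℂ →ₗ[ℂ] LaurentSeries ℂ)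
    (hD : ∀ (P : LaurentSeries ℂ) (n : ℤ), (D P).coeff n = ((n : ℂ) + 1) * P.coeff (n + 1))
    (br0 : (g ⊗[ℂ] LaurentSeries ℂ) →ₗ[ℂ] (g ⊗[ℂ] LaurentSeries ℂ) →ₗ[ℂ]
      (g ⊗[ℂ] LaurentSeries ℂ))
    (hbr0 : ∀ (x y : g) (P Q : LaurentSeries ℂ),
      br0 (x ⊗ₜ[ℂ] P) (y ⊗ₜ[ℂ] Q) = ⁅x, y⁆ ⊗ₜ[ℂ] (P * Q))
    (ω : (g ⊗[ℂ] LaurentSeries ℂ) →ₗ[ℂ] (g ⊗[ℂ] LaurentSeries ℂ) →ₗ[ℂ] ℂ)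
    (hω : ∀ (x y : g) (P Q : LaurentSeries ℂ),
      ω (x ⊗ₜ[ℂ] P) (y ⊗ₜ[ℂ] Q) = (D P * Q).coeff (-1) * B x y) :
    (∀ a b : g ⊗[ℂ] LaurentSeries ℂ, ω a b = - ω b a) ∧
    (∀ a b c : g ⊗[ℂ] LaurentSeries ℂ, ω (br0 a b) c + ω (br0 b c) a + ω (br0 c a) b = 0) ∧
    (let br : ((g ⊗[ℂ] LaurentSeries ℂ) × ℂ) → ((g ⊗[ℂ] LaurentSeries ℂ) × ℂ) →
        ((g ⊗[ℂ] LaurentSeries ℂ) × ℂ) := fun a b => (br0 a.1 b.1, ω a.1 b.1);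
      (∀ a b, br a b = - br b a) ∧
      (∀ a b c, br a (br b c) = br (br a b) c + br b (br a c))) := by
  -- residue of a derivative vanishes
  have hres : ∀ R : LaurentSeries ℂ, (D R).coeff (-1) = 0 := by
    intro R; rw [hD]; norm_num
  -- skew-symmetry of the residue pairing
  have hskewres : ∀ P Q : LaurentSeries ℂ,
      (D P * Q).coeff (-1) + (D Q * P).coeff (-1) = 0 := by
    intro P Q
    have h := hres (P * Q)
    rw [aux_leib D hD P Q, mul_comm P (D Q), HahnSeries.coeff_add] at h
    exact h
  -- cyclic residue identity
  have hcycres : ∀ P Q R : LaurentSeries ℂ,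
      (D (P * Q) * R).coeff (-1) + (D (Q * R) * P).coeff (-1)
        + (D (R * P) * Q).coeff (-1) = 0 := by
    intro P Q R
    have hser : D (P * Q) * R + D (Q * R) * P + D (R * P) * Q
        = D (P * (Q * R)) + D (P * (Q * R)) := by
      rw [aux_leib D hD P Q, aux_leib D hD Q R, aux_leib D hD R P,
        aux_leib D hD P (Q * R), aux_leib D hD Q R]
      ring
    have h2 := congrArg (fun S : LaurentSeries ℂ => S.coeff (-1)) hser
    simp only [HahnSeries.coeff_add, hres (P * (Q * R))] at h2
    linear_combination h2
  -- skew-symmetry of ω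
  have hskew : ∀ a b : g ⊗[ℂ] LaurentSeries ℂ, ω a b + ω b a = 0 := by
    have hF : ω + ω.flip = 0 := by
      ext x P y Q
      simp only [TensorProduct.AlgebraTensorModule.curry_apply, TensorProduct.curry_apply,
        LinearMap.coe_restrictScalars, LinearMap.add_apply, LinearMap.flip_apply,
        LinearMap.zero_apply]
      rw [hω, hω, hBsymm y x]
      linear_combination (B x y) * hskewres P Q
    intro a b
    have h := LinearMap.congr_fun (LinearMap.congr_fun hF a) b
    simpa using h
  -- skew-symmetry of br0
  have hbskew : ∀ a b : g ⊗[ℂ] LaurentSeries ℂ, br0 a b = -(br0 b a) := by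
    have hF : br0 + br0.flip = 0 := by
      ext x P y Q
      simp only [TensorProduct.AlgebraTensorModule.curry_apply, TensorProduct.curry_apply,
        LinearMap.coe_restrictScalars, LinearMap.add_apply, LinearMap.flip_apply,
        LinearMap.zero_apply]
      rw [hbr0, hbr0, mul_comm Q P]
      rw [show ⁅y, x⁆ = -⁅x, y⁆ from (lie_skew y x).symm, neg_tmul]
      abel
    intro a b
    have h := LinearMap.congr_fun (LinearMap.congr_fun hF a) b
    simp only [LinearMap.add_apply, LinearMap.flip_apply, LinearMap.zero_apply] at h
    have h' : br0 a b + br0 b a = 0 := h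
    exact eq_neg_of_add_eq_zero_left (a := br0 a b) (b := br0 b a) h'
  -- cocycle identity for ω
  have hco : ∀ a b c : g ⊗[ℂ] LaurentSeries ℂ,
      ω (br0 a b) c + ω (br0 b c) a + ω (br0 c a) b = 0 := by
    have hJ : br0.compr₂ ω + (LinearMap.lflip.comp (br0.compr₂ ω)).flip
        + (LinearMap.lflip.comp ((LinearMap.lflip.comp (br0.compr₂ ω)).flip)).flip = 0 := by
      ext x P y Q z R
      simp only [TensorProduct.AlgebraTensorModule.curry_apply, TensorProduct.curry_apply,
        LinearMap.coe_restrictScalars, LinearMap.add_apply, LinearMap.flip_apply,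
        LinearMap.coe_comp, Function.comp_apply, LinearEquiv.coe_coe, LinearMap.lflip_apply,
        LinearMap.compr₂_apply, LinearMap.zero_apply]
      rw [hbr0, hbr0, hbr0, hω, hω, hω]
      have e1 : B ⁅y, z⁆ x = B ⁅x, y⁆ z := by
        rw [hBsymm ⁅y, z⁆ x, ← hBinv x y z]
      have e2 : B ⁅z, x⁆ y = B ⁅x, y⁆ z := by
        rw [hBsymm ⁅z, x⁆ y, ← hBinv y z x, hBsymm ⁅y, z⁆ x, ← hBinv x y z]
      rw [e1, e2]
      linear_combination (B ⁅x, y⁆ z) * hcycres P Q R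
    intro a b c
    have h := LinearMap.congr_fun (LinearMap.congr_fun (LinearMap.congr_fun hJ a) b) c
    simpa only [LinearMap.add_apply, LinearMap.flip_apply, LinearMap.coe_comp,
      Function.comp_apply, LinearEquiv.coe_coe, LinearMap.lflip_apply, LinearMap.compr₂_apply,
      LinearMap.zero_apply] using h
  -- Leibniz identity for br0
  have hbleib : ∀ a b c : g ⊗[ℂ] LaurentSeries ℂ,
      br0 a (br0 b c) = br0 (br0 a b) c + br0 b (br0 a c) := by
    have hL : (LinearMap.lflip.comp (br0.compr₂ br0.flip)).flip
        = br0.compr₂ br0 + LinearMap.lflip.comp (br0.compr₂ br0.flip) := by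
      ext x P y Q z R
      simp only [TensorProduct.AlgebraTensorModule.curry_apply, TensorProduct.curry_apply,
        LinearMap.coe_restrictScalars, LinearMap.add_apply, LinearMap.flip_apply,
        LinearMap.coe_comp, Function.comp_apply, LinearEquiv.coe_coe, LinearMap.lflip_apply,
        LinearMap.compr₂_apply]
      calc br0 (x ⊗ₜ[ℂ] P) (br0 (y ⊗ₜ[ℂ] Q) (z ⊗ₜ[ℂ] R))
          = ⁅x, ⁅y, z⁆⁆ ⊗ₜ[ℂ] (P * (Q * R)) := by rw [hbr0, hbr0]
        _ = ⁅⁅x, y⁆, z⁆ ⊗ₜ[ℂ] ((P * Q) * R) + ⁅y, ⁅x, z⁆⁆ ⊗ₜ[ℂ] (Q * (P * R)) := by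
            rw [leibniz_lie, add_tmul]
            congr 1
            · rw [mul_assoc]
            · rw [mul_left_comm]
        _ = br0 (br0 (x ⊗ₜ[ℂ] P) (y ⊗ₜ[ℂ] Q)) (z ⊗ₜ[ℂ] R)
            + br0 (y ⊗ₜ[ℂ] Q) (br0 (x ⊗ₜ[ℂ] P) (z ⊗ₜ[ℂ] R)) := by
            rw [hbr0, hbr0, hbr0, hbr0]
    intro a b c
    have h := LinearMap.congr_fun (LinearMap.congr_fun (LinearMap.congr_fun hL a) b) c
    simpa only [LinearMap.add_apply, LinearMap.flip_apply, LinearMap.coe_comp,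
      Function.comp_apply, LinearEquiv.coe_coe, LinearMap.lflip_apply, LinearMap.compr₂_apply] using h
  refine ⟨fun a b => eq_neg_of_add_eq_zero_left (a := ω a b) (b := ω b a) (hskew a b),
    hco, ?_⟩
  intro br
  constructor
  · intro a b
    show (br0 a.1 b.1, ω a.1 b.1) = -(br0 b.1 a.1, ω b.1 a.1)
    refine Prod.ext_iff.mpr ⟨?_, ?_⟩ <;> simp only [Prod.fst_neg, Prod.snd_neg]
    · exact hbskew _ _
    · exact eq_neg_of_add_eq_zero_left (a := ω a.1 b.1) (b := ω b.1 a.1) (hskew a.1 b.1)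
  · intro a b c
    show (br0 a.1 (br0 b.1 c.1), ω a.1 (br0 b.1 c.1))
        = (br0 (br0 a.1 b.1) c.1, ω (br0 a.1 b.1) c.1)
          + (br0 b.1 (br0 a.1 c.1), ω b.1 (br0 a.1 c.1))
    rw [Prod.mk_add_mk]
    refine Prod.ext_iff.mpr ⟨hbleib _ _ _, ?_⟩
    have h1 := hco a.1 b.1 c.1
    have h2 : ω (br0 b.1 c.1) a.1 = -(ω a.1 (br0 b.1 c.1)) :=
      eq_neg_of_add_eq_zero_left (hskew _ _)
    have h4 : ω (br0 a.1 c.1) b.1 = -(ω b.1 (br0 a.1 c.1)) :=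
      eq_neg_of_add_eq_zero_left (hskew _ _)
    have h3 : ω (br0 c.1 a.1) b.1 = -(ω (br0 a.1 c.1) b.1) := by
      have e : br0 c.1 a.1 = -(br0 a.1 c.1) := hbskew c.1 a.1
      calc ω (br0 c.1 a.1) b.1 = ω (-(br0 a.1 c.1)) b.1 := by rw [e]
        _ = -(ω (br0 a.1 c.1) b.1) := by
            have hmn := map_neg ω (br0 a.1 c.1)
            rw [hmn, LinearMap.neg_apply]
    linear_combination -h1 + h2 + h3 - h4
end

section
/- Every finite group of ℂ-algebra automorphisms of the formal power series ring ℂ[[t]] is cyclic. More precisely, the map sending an automorphism σ to its action on the cotangent space 𝔪/𝔪² ≅ ℂ (i.e., to the linear coefficient of σ(t)) is an injective group homomorphism from the finite group into ℂ^×, and every finite subgroup of ℂ^× is cyclic. -/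
open PowerSeries

local notation "AutA" => (PowerSeries ℂ ≃ₐ[ℂ] PowerSeries ℂ)

private theorem aux_constX (σ : AutA) : constantCoeff (R := ℂ) (σ X) = 0 := by
  by_contra h
  have hu : IsUnit (σ X) := isUnit_iff_constantCoeff.mpr (isUnit_iff_ne_zero.mpr h)
  have hX : IsUnit (X : PowerSeries ℂ) := by
    have := hu.map (σ.symm : PowerSeries ℂ →ₐ[ℂ] PowerSeries ℂ)
    simpa using this
  have := isUnit_iff_constantCoeff.mp hX
  simp [constantCoeff_X] at this

private theorem aux_C (σ : AutA) (a : ℂ) : σ (C (R := ℂ) a) = C (R := ℂ) a := by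
  have := σ.commutes a
  rwa [show (algebraMap ℂ (PowerSeries ℂ)) a = C (R := ℂ) a from rfl] at this

private theorem aux_decomp (f : PowerSeries ℂ) :
    ∃ g, f = C (R := ℂ) (constantCoeff (R := ℂ) f) + X * g := by
  obtain ⟨g, hg⟩ := X_dvd_iff.mpr
    (show constantCoeff (R := ℂ) (f - C (R := ℂ) (constantCoeff (R := ℂ) f)) = 0 by simp)
  exact ⟨g, by linear_combination hg⟩

private theorem aux_const (σ : AutA) (f : PowerSeries ℂ) :
    constantCoeff (R := ℂ) (σ f) = constantCoeff (R := ℂ) f := by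
  obtain ⟨g, hg⟩ := aux_decomp f
  rw [hg, map_add, map_mul, aux_C]
  simp [aux_constX]

private theorem aux_coeff1 (σ : AutA) (f : PowerSeries ℂ) :
    coeff (R := ℂ) 1 (σ f) = coeff (R := ℂ) 1 f * coeff (R := ℂ) 1 (σ X) := by
  obtain ⟨g, hg⟩ := aux_decomp f
  obtain ⟨u, hu⟩ := X_dvd_iff.mpr (aux_constX σ)
  have h1 : coeff (R := ℂ) 1 f = constantCoeff (R := ℂ) g := by
    rw [hg]
    simp [coeff_C, coeff_succ_X_mul, coeff_zero_eq_constantCoeff]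
  have h2 : coeff (R := ℂ) 1 (σ X) = constantCoeff (R := ℂ) u := by
    rw [hu]
    simp [coeff_succ_X_mul, coeff_zero_eq_constantCoeff]
  rw [hg, map_add, map_mul, aux_C, hu]
  have : X * u * σ g = X * (u * σ g) := by ring
  rw [this]
  simp [coeff_C, coeff_succ_X_mul, coeff_zero_eq_constantCoeff, h1, h2, aux_const, mul_comm]

private theorem aux_Xpow (σ : AutA) (n : ℕ) (f : PowerSeries ℂ) (h : X ^ n ∣ f) :
    X ^ n ∣ σ f := by
  obtain ⟨g, hg⟩ := h
  obtain ⟨u, hu⟩ := X_dvd_iff.mpr (aux_constX σ)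
  rw [hg, map_mul, map_pow, hu, mul_pow]
  exact ⟨u ^ n * σ g, by ring⟩

private theorem aux_poly (σ : AutA) (h : σ X = X) (p : Polynomial ℂ) :
    σ (p : PowerSeries ℂ) = (p : PowerSeries ℂ) := by
  induction p using Polynomial.induction_on' with
  | add p q hp hq => rw [Polynomial.coe_add, map_add, hp, hq]
  | monomial n a =>
      rw [Polynomial.coe_monomial]
      have hm : (monomial (R := ℂ) n) a = C (R := ℂ) a * X ^ n := by
        ext m
        simp only [coeff_monomial, coeff_C_mul, coeff_X_pow, mul_ite, mul_one, mul_zero]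
      rw [hm, map_mul, map_pow, aux_C, h]

private theorem aux_fix (σ : AutA) (h : σ X = X) : σ = 1 := by
  apply AlgEquiv.ext
  intro f
  apply PowerSeries.ext
  intro j
  have hdvd : X ^ (j + 1) ∣ f - ((trunc (j+1) f : Polynomial ℂ) : PowerSeries ℂ) := by
    rw [X_pow_dvd_iff]
    intro m hm
    simp [coeff_coe_trunc_of_lt hm]
  have h2 : X ^ (j + 1) ∣ σ f - f := by
    have h3 := aux_Xpow σ (j+1) _ hdvd
    rw [map_sub, aux_poly σ h] at h3
    have : σ f - f = (σ f - ((trunc (j+1) f : Polynomial ℂ) : PowerSeries ℂ))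
        - (f - ((trunc (j+1) f : Polynomial ℂ) : PowerSeries ℂ)) := by ring
    rw [this]
    exact dvd_sub h3 hdvd
  have := X_pow_dvd_iff.mp h2 j (Nat.lt_succ_self j)
  rw [map_sub, sub_eq_zero] at this
  simpa using this

private theorem aux_key (ρ : AutA) (k : ℕ) (u : PowerSeries ℂ) (hk : 2 ≤ k)
    (hρ : ρ X = X + X ^ k * u) (n : ℕ) :
    X ^ (k + 1) ∣ ((ρ ^ n : AutA) X - X - C (R := ℂ) ((n : ℂ) * constantCoeff (R := ℂ) u) * X ^ k) := by
  induction n with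
  | zero => simp
  | succ n ih =>
    set a := constantCoeff (R := ℂ) u with ha
    obtain ⟨s, hs⟩ := ih
    have hstep : (ρ ^ (n+1) : AutA) X = ρ ((ρ ^ n : AutA) X) := by
      rw [pow_succ' ρ n, AlgEquiv.mul_apply]
    have hρn : (ρ ^ n : AutA) X = X + C (R := ℂ) ((n : ℂ) * a) * X ^ k + X ^ (k+1) * s := by
      rw [← hs]; ring
    have hv : ρ X = X * (1 + X ^ (k-1) * u) := by
      rw [hρ]
      have : (X : PowerSeries ℂ) ^ k = X * X ^ (k - 1) := by
        rw [← pow_succ']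
        congr 1
        omega
      rw [this]; ring
    have hT1 : X ^ (k+1) ∣ (ρ X - X - C (R := ℂ) a * X ^ k) := by
      have : ρ X - X - C (R := ℂ) a * X ^ k = X ^ k * (u - C (R := ℂ) a) := by rw [hρ]; ring
      rw [this, pow_succ]
      apply mul_dvd_mul_left
      rw [X_dvd_iff]
      simp [ha]
    have hT2 : X ^ (k+1) ∣ ((ρ X) ^ k - X ^ k) := by
      have heq : (ρ X) ^ k - X ^ k = X ^ k * ((1 + X ^ (k-1) * u) ^ k - 1) := by
        rw [hv, mul_pow]; ring
      have hd : X ^ (k-1) ∣ ((1 + X ^ (k-1) * u) ^ k - 1) := by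
        have := sub_dvd_pow_sub_pow (1 + X ^ (k-1) * u) 1 k
        simp only [one_pow] at this
        have h' : (1 + X ^ (k-1) * u) - 1 = X ^ (k-1) * u := by ring
        rw [h'] at this
        exact dvd_trans (Dvd.intro u rfl) this
      have : X ^ (k + (k-1)) ∣ (ρ X) ^ k - X ^ k := by
        rw [heq, pow_add]
        exact mul_dvd_mul_left _ hd
      exact dvd_trans (pow_dvd_pow X (by omega)) this
    have hT3 : X ^ (k+1) ∣ (ρ X) ^ (k+1) * ρ s := by
      have hxd : (X : PowerSeries ℂ) ∣ ρ X := ⟨1 + X ^ (k-1) * u, hv⟩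
      exact Dvd.dvd.mul_right (pow_dvd_pow_of_dvd hxd (k+1)) _
    have hexp : (ρ ^ (n+1) : AutA) X - X - C (R := ℂ) (((n:ℕ)+1 : ℂ) * a) * X ^ k
        = (ρ X - X - C (R := ℂ) a * X ^ k) + C (R := ℂ) ((n : ℂ) * a) * ((ρ X) ^ k - X ^ k)
          + (ρ X) ^ (k+1) * ρ s := by
      rw [hstep, hρn, map_add ρ, map_add ρ,
        map_mul ρ (C (R := ℂ) ((n : ℂ) * a)) (X ^ k), map_mul ρ (X ^ (k+1)) s,
        map_pow ρ X k, map_pow ρ X (k+1), aux_C]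
      have hC : C (R := ℂ) (((n:ℕ)+1 : ℂ) * a) = C (R := ℂ) ((n:ℂ) * a) + C (R := ℂ) a := by
        rw [← map_add]; ring_nf
      rw [hC]; ring
    have : ((n+1 : ℕ) : ℂ) = ((n:ℕ)+1 : ℂ) := by push_cast; ring
    rw [this, hexp]
    exact dvd_add (dvd_add hT1 (Dvd.dvd.mul_left hT2 _)) hT3

private theorem aux_inj (ρ : AutA) (h1 : coeff (R := ℂ) 1 (ρ X) = 1)
    (hn : ∃ n : ℕ, 0 < n ∧ ρ ^ n = 1) : ρ = 1 := by
  suffices h : ρ X = X from aux_fix ρ h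
  by_contra hne
  have hD0 : ρ X - X ≠ 0 := sub_ne_zero.mpr hne
  have hex : ∃ j, coeff (R := ℂ) j (ρ X - X) ≠ 0 := by
    by_contra hc
    push_neg at hc
    exact hD0 (PowerSeries.ext fun j => by simpa using hc j)
  set k := Nat.find hex with hkdef
  have hkspec : coeff (R := ℂ) k (ρ X - X) ≠ 0 := Nat.find_spec hex
  have hmin : ∀ m < k, coeff (R := ℂ) m (ρ X - X) = 0 := fun m hm =>
    not_not.mp (Nat.find_min hex hm)
  have h0 : coeff (R := ℂ) 0 (ρ X - X) = 0 := by
    rw [map_sub]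
    simp [coeff_zero_eq_constantCoeff, aux_constX, constantCoeff_X]
  have h1' : coeff (R := ℂ) 1 (ρ X - X) = 0 := by
    rw [map_sub, h1, coeff_one_X, sub_self]
  have hk2 : 2 ≤ k := by
    rcases Nat.lt_or_ge k 2 with h | h
    · interval_cases k
      · exact absurd h0 hkspec
      · exact absurd h1' hkspec
    · exact h
  have hdvd : X ^ k ∣ ρ X - X :=
    X_pow_dvd_iff.mpr fun m hm => hmin m hm
  obtain ⟨u, hu⟩ := hdvd
  have ha : constantCoeff (R := ℂ) u ≠ 0 := by
    intro hc
    apply hkspec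
    rw [hu]
    have := coeff_X_pow_mul u k 0
    rw [zero_add] at this
    rw [this, coeff_zero_eq_constantCoeff, hc]
  have hρ : ρ X = X + X ^ k * u := by rw [← hu]; ring
  obtain ⟨n, hn0, hpow⟩ := hn
  have hkey := aux_key ρ k u hk2 hρ n
  rw [hpow] at hkey
  have h1X : (1 : AutA) X = X := AlgEquiv.one_apply X
  rw [h1X] at hkey
  have : X ^ (k+1) ∣ (C (R := ℂ) ((n:ℂ) * constantCoeff (R := ℂ) u) * X ^ k : PowerSeries ℂ) := by
    have hneg := dvd_neg.mpr hkey
    have he : -(X - X - C (R := ℂ) ((n:ℂ) * constantCoeff (R := ℂ) u) * X ^ k)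
        = (C (R := ℂ) ((n:ℂ) * constantCoeff (R := ℂ) u) * X ^ k : PowerSeries ℂ) := by ring
    rwa [he] at hneg
  have hco := X_pow_dvd_iff.mp this k (Nat.lt_succ_self k)
  rw [coeff_C_mul_X_pow] at hco
  simp only [if_pos rfl] at hco
  have hnc : (n : ℂ) ≠ 0 := Nat.cast_ne_zero.mpr hn0.ne'
  exact (mul_ne_zero hnc ha) (by simpa using hco)

/-- Every finite group of `ℂ`-algebra automorphisms of `ℂ[[t]]` is cyclic: the map sending
an automorphism `σ` to the linear coefficient of `σ(t)` is a multiplicative, injective map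
into `ℂ^×` (the coefficient is nonzero), and every finite subgroup of `ℂ^×` is cyclic. -/
theorem stmt_8 (G : Subgroup (PowerSeries ℂ ≃ₐ[ℂ] PowerSeries ℂ)) [Finite G] :
    (∀ σ τ : G,
      PowerSeries.coeff (R := ℂ) 1
          (((σ * τ : G) : PowerSeries ℂ ≃ₐ[ℂ] PowerSeries ℂ) PowerSeries.X)
        = PowerSeries.coeff (R := ℂ) 1 ((σ : PowerSeries ℂ ≃ₐ[ℂ] PowerSeries ℂ) PowerSeries.X)
          * PowerSeries.coeff (R := ℂ) 1 ((τ : PowerSeries ℂ ≃ₐ[ℂ] PowerSeries ℂ) PowerSeries.X)) ∧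
    (∀ σ : G,
      PowerSeries.coeff (R := ℂ) 1 ((σ : PowerSeries ℂ ≃ₐ[ℂ] PowerSeries ℂ) PowerSeries.X) ≠ 0) ∧
    Function.Injective (fun σ : G =>
      PowerSeries.coeff (R := ℂ) 1 ((σ : PowerSeries ℂ ≃ₐ[ℂ] PowerSeries ℂ) PowerSeries.X)) ∧
    IsCyclic G ∧
    (∀ H : Subgroup ℂˣ, Finite H → IsCyclic H) := by
  have hmul : ∀ σ τ : G,
      coeff (R := ℂ) 1 (((σ * τ : G) : AutA) X)
        = coeff (R := ℂ) 1 ((σ : AutA) X) * coeff (R := ℂ) 1 ((τ : AutA) X) := by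
    intro σ τ
    have hc : ((σ * τ : G) : AutA) = (σ : AutA) * (τ : AutA) := rfl
    rw [hc, AlgEquiv.mul_apply, aux_coeff1]
    ring
  have hone : coeff (R := ℂ) 1 (((1 : G) : AutA) X) = 1 := by
    rw [show ((1 : G) : AutA) = 1 from rfl, AlgEquiv.one_apply, coeff_one_X]
  have hne : ∀ σ : G, coeff (R := ℂ) 1 ((σ : AutA) X) ≠ 0 := by
    intro σ
    have h := aux_coeff1 (σ : AutA) ((σ : AutA).symm X)
    rw [AlgEquiv.apply_symm_apply, coeff_one_X] at h
    intro hc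
    rw [hc, mul_zero] at h
    exact one_ne_zero h
  have hinj : Function.Injective (fun σ : G => coeff (R := ℂ) 1 ((σ : AutA) X)) := by
    intro σ τ h
    simp only at h
    have hττ := hmul τ τ⁻¹
    rw [mul_inv_cancel, hone] at hττ
    have hρ1 : coeff (R := ℂ) 1 (((σ * τ⁻¹ : G) : AutA) X) = 1 := by
      rw [hmul σ τ⁻¹, h, ← hττ]
    have hord : ∃ n : ℕ, 0 < n ∧ ((σ * τ⁻¹ : G) : AutA) ^ n = 1 := by
      refine ⟨orderOf (σ * τ⁻¹ : G), orderOf_pos _, ?_⟩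
      have hp := pow_orderOf_eq_one (σ * τ⁻¹ : G)
      calc ((σ * τ⁻¹ : G) : AutA) ^ orderOf (σ * τ⁻¹ : G)
          = (((σ * τ⁻¹ : G) ^ orderOf (σ * τ⁻¹ : G) : G) : AutA) := by
            rw [SubmonoidClass.coe_pow]
        _ = 1 := by rw [hp]; rfl
    have hcoe : ((σ * τ⁻¹ : G) : AutA) = 1 := aux_inj _ hρ1 hord
    have : (σ * τ⁻¹ : G) = 1 := by
      exact_mod_cast (OneMemClass.coe_eq_one).mp hcoe
    exact mul_inv_eq_one.mp this
  refine ⟨hmul, hne, hinj, ?_, ?_⟩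
  · let φ : G →* ℂ :=
      { toFun := fun σ => coeff (R := ℂ) 1 ((σ : AutA) X)
        map_one' := hone
        map_mul' := hmul }
    exact isCyclic_of_subgroup_isDomain φ hinj
  · intro H hH
    exact subgroup_units_cyclic H
end

section
/- Let σ be a ℂ-algebra automorphism of ℂ[[t]] of finite order m, and suppose σ(t) = ζ t + (higher order terms) where ζ is a primitive m-th root of unity. Then there exists a formal parameter t̃ ∈ ℂ[[t]] (i.e., t̃ = c t + higher order terms with c ≠ 0) such that σ(t̃) = ζ t̃; indeed t̃ = (1/m) Σ_{i=0}^{m-1} ζ^{-i} σ^i(t) works. -/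
lemma aux0 (σ : PowerSeries ℂ ≃ₐ[ℂ] PowerSeries ℂ)
    (h0 : PowerSeries.coeff 0 (σ PowerSeries.X) = 0) (f : PowerSeries ℂ) :
    PowerSeries.coeff 0 (σ f) = PowerSeries.coeff 0 f := by
  set c := PowerSeries.constantCoeff f with hc
  have hdvd : (PowerSeries.X : PowerSeries ℂ) ∣ (f - PowerSeries.C c) := by
    rw [PowerSeries.X_dvd_iff]; simp [hc]
  obtain ⟨g, hg⟩ := hdvd
  have hf : f = PowerSeries.C c + PowerSeries.X * g := by rw [← hg]; ring
  have hC : σ (PowerSeries.C c) = PowerSeries.C c := by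
    have := σ.commutes c
    simpa [PowerSeries.C_eq_algebraMap] using this
  rw [hf, map_add, hC, map_mul]
  have := PowerSeries.coeff_zero_eq_constantCoeff (R := ℂ) ▸ h0
  simp_all [PowerSeries.coeff_zero_eq_constantCoeff]

lemma aux1 (σ : PowerSeries ℂ ≃ₐ[ℂ] PowerSeries ℂ) (ζ : ℂ)
    (h0 : PowerSeries.coeff 0 (σ PowerSeries.X) = 0)
    (h1 : PowerSeries.coeff 1 (σ PowerSeries.X) = ζ) (f : PowerSeries ℂ) :
    PowerSeries.coeff 1 (σ f) = ζ * PowerSeries.coeff 1 f := by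
  set c := PowerSeries.constantCoeff f with hc
  have hdvd : (PowerSeries.X : PowerSeries ℂ) ∣ (f - PowerSeries.C c) := by
    rw [PowerSeries.X_dvd_iff]; simp [hc]
  obtain ⟨g, hg⟩ := hdvd
  have hf : f = PowerSeries.C c + PowerSeries.X * g := by rw [← hg]; ring
  have hC : σ (PowerSeries.C c) = PowerSeries.C c := by
    have := σ.commutes c
    simpa [PowerSeries.C_eq_algebraMap] using this
  have hg0 : PowerSeries.coeff 0 (σ g) = PowerSeries.coeff 0 g := aux0 σ h0 g
  have hf1 : PowerSeries.coeff 1 f = PowerSeries.coeff 0 g := by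
    rw [hf]; simp [PowerSeries.coeff_succ_X_mul]
  rw [hf, map_add, hC, map_mul]
  have key : ∀ a b : PowerSeries ℂ, PowerSeries.coeff 1 (a * b) =
      PowerSeries.coeff 0 a * PowerSeries.coeff 1 b +
      PowerSeries.coeff 1 a * PowerSeries.coeff 0 b := by
    intro a b
    rw [PowerSeries.coeff_mul]
    rw [show (1:ℕ) = 0 + 1 from rfl, Finset.Nat.antidiagonal_succ]
    simp [Finset.sum_insert, Prod.map, add_comm]
  rw [map_add, key]
  rw [map_add (PowerSeries.coeff 1), key]
  simp [h0, h1, hg0, PowerSeries.coeff_C]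

lemma aux2 (σ : PowerSeries ℂ ≃ₐ[ℂ] PowerSeries ℂ) (ζ : ℂ)
    (h0 : PowerSeries.coeff 0 (σ PowerSeries.X) = 0)
    (h1 : PowerSeries.coeff 1 (σ PowerSeries.X) = ζ) (i : ℕ) :
    PowerSeries.coeff 0 ((σ ^ i) PowerSeries.X) = 0 ∧
    PowerSeries.coeff 1 ((σ ^ i) PowerSeries.X) = ζ ^ i := by
  induction i with
  | zero => simp
  | succ n ih =>
    have hs : (σ ^ (n+1)) PowerSeries.X = σ ((σ ^ n) PowerSeries.X) := by
      rw [pow_succ']; rfl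
    constructor
    · rw [hs, aux0 σ h0, ih.1]
    · rw [hs, aux1 σ ζ h0 h1, ih.2, pow_succ]; ring



/-- If `σ` is a `ℂ`-algebra automorphism of `ℂ[[t]]` of finite order `m` with
`σ(t) = ζt + (higher order terms)`, `ζ` a primitive `m`-th root of unity, then the element
`t̃ = (1/m) Σ_{i<m} ζ^{-i} σ^i(t)` is a formal parameter (zero constant term, nonzero
linear coefficient) satisfying `σ(t̃) = ζ t̃`. -/
theorem stmt_9 (m : ℕ) (hm : 0 < m) (σ : PowerSeries ℂ ≃ₐ[ℂ] PowerSeries ℂ)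
    (hσm : σ ^ m = 1) (ζ : ℂ) (hζ : IsPrimitiveRoot ζ m)
    (h0 : PowerSeries.coeff 0 (σ PowerSeries.X) = 0)
    (h1 : PowerSeries.coeff 1 (σ PowerSeries.X) = ζ) :
    ∃ t' : PowerSeries ℂ,
      t' = (m : ℂ)⁻¹ • ∑ i ∈ Finset.range m,
        (ζ ^ i)⁻¹ • (((σ ^ i : PowerSeries ℂ ≃ₐ[ℂ] PowerSeries ℂ)) PowerSeries.X) ∧
      PowerSeries.coeff 0 t' = 0 ∧ PowerSeries.coeff 1 t' ≠ 0 ∧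
      σ t' = ζ • t' := by
  have hζ0 : ζ ≠ 0 := by
    intro h
    have := hζ.pow_eq_one
    rw [h, zero_pow hm.ne'] at this
    exact zero_ne_one this
  have hζm : ζ ^ m = 1 := hζ.pow_eq_one
  set F : ℕ → PowerSeries ℂ :=
    fun i => (ζ ^ i)⁻¹ • ((σ ^ i : PowerSeries ℂ ≃ₐ[ℂ] PowerSeries ℂ) PowerSeries.X) with hF
  have hFm : F m = F 0 := by rw [hF]; simp only [hζm, hσm, pow_zero, inv_one, one_smul, AlgEquiv.one_apply]
  refine ⟨(m : ℂ)⁻¹ • ∑ i ∈ Finset.range m, F i, rfl, ?_, ?_, ?_⟩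
  · simp only [map_smul, map_sum, hF]
    simp only [fun i => (aux2 σ ζ h0 h1 i).1, smul_zero, Finset.sum_const_zero]
  · simp only [map_smul, map_sum, hF, smul_eq_mul]
    have : ∀ i ∈ Finset.range m,
        (ζ ^ i)⁻¹ * PowerSeries.coeff 1 ((σ ^ i : PowerSeries ℂ ≃ₐ[ℂ] PowerSeries ℂ)
          PowerSeries.X) = 1 := by
      intro i _
      rw [(aux2 σ ζ h0 h1 i).2, inv_mul_cancel₀ (pow_ne_zero _ hζ0)]
    rw [Finset.sum_congr rfl this]
    simp [hm.ne', Nat.cast_ne_zero]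
  · have hstep : ∀ i, σ (F i) = ζ • F (i + 1) := by
      intro i
      have hs : (σ ^ (i+1)) PowerSeries.X = σ ((σ ^ i) PowerSeries.X) := by
        rw [pow_succ']; rfl
      rw [hF]
      simp only [map_smul, hs.symm, smul_smul]
      congr 1
      rw [pow_succ]
      field_simp
    rw [map_smul, map_sum]
    simp only [hstep]
    rw [← Finset.smul_sum, smul_comm]
    congr 2
    have := Finset.sum_range_succ' F m
    rw [Finset.sum_range_succ, hFm] at this
    exact (add_right_cancel this).symm
end
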